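/- Let c ≥ 3 be an odd integer, ℓ ≥ 1, and let A be a real m×n matrix. Let p : {1,…,n} → M_{c,ℓ} be a floating coloring taking exactly τ distinct values. Then there exists a floating coloring q : {1,…,n} → M_{c,ℓ−1} such that d_A(p, q) ≤ (1/2)·(c − 1)·c^{−ℓ+1} · τ · herdisc(A, c). -/

import Mathlib

open Finset

/-- `c`-color discrepancy of a matrix: minimum over `c`-colorings `p` of the columns of the
maximum over colors `d` and rows `i` of `|∑_{j : p j = d} A i j - (1/c) ∑_j A i j|`. -/
noncomputable def mdisc {ι κ : Type*} [Fintype ι] [Fintype κ] (A : ι → κ → ℝ) (c : ℕ) : ℝ :=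
  ⨅ p : κ → Fin c, ⨆ d : Fin c, ⨆ i : ι,
    |∑ j ∈ Finset.univ.filter (fun j => p j = d), A i j - (1 / (c : ℝ)) * ∑ j, A i j|

/-- hereditary `c`-color discrepancy: maximum of `mdisc` over all nonempty column submatrices. -/
noncomputable def mherdisc {ι : Type*} [Fintype ι] {n : ℕ} (A : ι → Fin n → ℝ) (c : ℕ) : ℝ :=
  ⨆ J : {J : Finset (Fin n) // J.Nonempty}, mdisc (fun i (j : {x // x ∈ J.1}) => A i j.1) c

/-- `d_A(p,q) = max_i |∑_j a_{ij} (p j - q j)|` for floating colorings `p, q`. -/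
noncomputable def dA {ι κ : Type*} [Fintype ι] [Fintype κ] (A : ι → κ → ℝ) (p q : κ → ℝ) : ℝ :=
  ⨆ i : ι, |∑ j, A i j * (p j - q j)|

/-- weighted discrepancy with weight `z`: min over `{0,1}`-colorings `q` of `d_A(z·1, q)`. -/
noncomputable def wdisc {ι κ : Type*} [Fintype ι] [Fintype κ] (A : ι → κ → ℝ) (z : ℝ) : ℝ :=
  ⨅ q : κ → Bool, dA A (fun _ => z) (fun j => if q j then 1 else 0)

/-- `M_{c,ℓ}`: numbers in `[0,1]` with a `c`-ary expansion `∑_{i=0}^ℓ a_i c^{-i}`,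
with digits `a_i ∈ {0, …, c-1}`. -/
def Mset (c ℓ : ℕ) : Set ℝ :=
  {x | x ∈ Set.Icc (0:ℝ) 1 ∧
    ∃ a : Fin (ℓ+1) → ℕ, (∀ i, a i < c) ∧ x = ∑ i, (a i : ℝ) / (c : ℝ) ^ (i : ℕ)}

lemma natRepr (c : ℕ) (hc : 2 ≤ c) : ∀ L k, k < c^L → ∑ i ∈ Finset.range L, (k / c^i % c) * c^i = k := by
  intro L
  induction L with
  | zero => intro k hk; simp at hk; simp [hk]
  | succ L ih =>
    intro k hk
    rw [Finset.sum_range_succ']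
    simp only [pow_zero, Nat.div_one, mul_one]
    have hdd : ∀ i : ℕ, k / c ^ i / c = k / c / c ^ i := by
      intro i
      rw [Nat.div_div_eq_div_mul, Nat.div_div_eq_div_mul, Nat.mul_comm]
    have h1 : ∀ i, k / c^(i+1) % c * c^(i+1) = c * ((k / c) / c^i % c * c^i) := by
      intro i
      rw [pow_succ, ← Nat.div_div_eq_div_mul, hdd]
      ring
    have h2 : ∑ i ∈ Finset.range L, k / c^(i+1) % c * c^(i+1)
        = c * ∑ i ∈ Finset.range L, (k / c) / c^i % c * c^i := by
      rw [Finset.mul_sum]; exact Finset.sum_congr rfl fun i _ => h1 i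
    have h3 : k / c < c ^ L := by
      rw [Nat.div_lt_iff_lt_mul (by omega), ← pow_succ]
      exact hk
    rw [h2, ih _ h3]
    exact Nat.div_add_mod k c

lemma mem_Mset_of (c L k : ℕ) (hc : 2 ≤ c) (hk : k ≤ c^L) :
    ((k : ℝ) / (c:ℝ)^L) ∈ Mset c L := by
  have hc0 : (0:ℝ) < (c:ℝ) := by positivity
  have hcL : (0:ℝ) < (c:ℝ)^L := by positivity
  refine ⟨⟨by positivity, ?_⟩, ?_⟩
  · rw [div_le_one hcL]
    exact_mod_cast hk
  · refine ⟨fun j => k / c ^ (L - (j:ℕ)) % c, fun j => Nat.mod_lt _ (by omega), ?_⟩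
    have key : ∑ i ∈ Finset.range (L+1), (k / c^i % c) * c^i = k :=
      natRepr c hc (L+1) k (lt_of_le_of_lt hk (Nat.pow_lt_pow_succ (by omega)))
    have keyR : ∑ j ∈ Finset.range (L+1), (k / c^(L-j) % c) * c^(L-j) = k := by
      refine Eq.trans (Finset.sum_congr rfl fun j hj => ?_)
        ((Finset.sum_range_reflect (fun i => (k / c^i % c) * c^i) (L+1)).trans key)
      show _ = k / c ^ (L+1-1-j) % c * c ^ (L+1-1-j)
      rw [show L + 1 - 1 - j = L - j from by omega]
    rw [Fin.sum_univ_eq_sum_range (fun j => ((k / c^(L-j) % c : ℕ):ℝ) / (c:ℝ)^j) (L+1)]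
    have step : ∀ j ∈ Finset.range (L+1),
        ((k / c^(L-j) % c : ℕ):ℝ) / (c:ℝ)^j = (((k / c^(L-j) % c) * c^(L-j) : ℕ):ℝ) / (c:ℝ)^L := by
      intro j hj
      have hjL : j ≤ L := by simpa [Nat.lt_succ_iff] using hj
      push_cast
      rw [div_eq_div_iff (by positivity) (ne_of_gt hcL)]
      rw [mul_assoc, ← pow_add]
      congr 2
      omega
    rw [Finset.sum_congr rfl step, ← Finset.sum_div]
    rw [show (∑ j ∈ Finset.range (L+1), (((k / c^(L-j) % c) * c^(L-j) : ℕ):ℝ)) = ((k:ℕ):ℝ) by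
      rw [← Nat.cast_sum]; exact_mod_cast congrArg (Nat.cast (R := ℝ)) keyR]

lemma card_lt_filter (c a : ℕ) (ha : a ≤ c) :
    (Finset.univ.filter (fun d : Fin c => (d:ℕ) < a)).card = a := by
  have : Finset.univ.filter (fun d : Fin c => (d:ℕ) < a)
      = Finset.map (Fin.castLEEmb ha) Finset.univ := by
    ext d
    simp only [Finset.mem_filter, Finset.mem_univ, true_and, Finset.mem_map,
      Fin.castLEEmb_apply]
    constructor
    · intro h; exact ⟨⟨d, h⟩, rfl⟩
    · rintro ⟨x, rfl⟩; exact x.2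
  rw [this, Finset.card_map, Finset.card_univ, Fintype.card_fin]

lemma coreE {c : ℕ} (hc : 3 ≤ c) (hodd : Odd c) (a : ℕ) (ha : a < c)
    (E : Fin c → ℝ) (H : ℝ) (hE : ∀ d, |E d| ≤ H) (hsum : ∑ d, E d = 0) :
    |∑ d ∈ Finset.univ.filter (fun d : Fin c => (d:ℕ) < a), E d| ≤ ((c:ℝ)-1)/2 * H := by
  obtain ⟨k, hk⟩ := hodd
  have hH : 0 ≤ H := le_trans (abs_nonneg _) (hE ⟨0, by omega⟩)
  have hhalf : ((c:ℝ)-1)/2 = (k:ℕ) := by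
    have : (c:ℝ) = 2*(k:ℝ)+1 := by exact_mod_cast congrArg (Nat.cast (R := ℝ)) hk
    rw [this]; ring
  rw [hhalf]
  have habs : ∀ (S : Finset (Fin c)), |∑ d ∈ S, E d| ≤ (S.card : ℝ) * H := by
    intro S
    calc |∑ d ∈ S, E d| ≤ ∑ d ∈ S, |E d| := Finset.abs_sum_le_sum_abs _ _
    _ ≤ ∑ d ∈ S, H := Finset.sum_le_sum (fun d _ => hE d)
    _ = (S.card : ℝ) * H := by rw [Finset.sum_const, nsmul_eq_mul]
  by_cases hak : a ≤ k
  · calc |∑ d ∈ Finset.univ.filter (fun d : Fin c => (d:ℕ) < a), E d|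
        ≤ ((Finset.univ.filter (fun d : Fin c => (d:ℕ) < a)).card : ℝ) * H := habs _
    _ = (a:ℝ) * H := by rw [card_lt_filter c a ha.le]
    _ ≤ (k:ℝ) * H := by
        apply mul_le_mul_of_nonneg_right _ hH; exact_mod_cast hak
  · have hsplit : ∑ d ∈ Finset.univ.filter (fun d : Fin c => (d:ℕ) < a), E d
        = - ∑ d ∈ Finset.univ.filter (fun d : Fin c => ¬ (d:ℕ) < a), E d := by
      have := Finset.sum_filter_add_sum_filter_not Finset.univ (fun d : Fin c => (d:ℕ) < a) E
      rw [hsum] at this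
      linarith
    rw [hsplit, abs_neg]
    have hcard : (Finset.univ.filter (fun d : Fin c => ¬ (d:ℕ) < a)).card = c - a := by
      have := Finset.card_filter_add_card_filter_not
        (s := (Finset.univ : Finset (Fin c))) (p := fun d : Fin c => (d:ℕ) < a)
      rw [card_lt_filter c a ha.le, Finset.card_univ, Fintype.card_fin] at this
      omega
    calc |∑ d ∈ Finset.univ.filter (fun d : Fin c => ¬ (d:ℕ) < a), E d|
        ≤ ((Finset.univ.filter (fun d : Fin c => ¬ (d:ℕ) < a)).card : ℝ) * H := habs _
    _ = ((c - a : ℕ):ℝ) * H := by rw [hcard]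
    _ ≤ (k:ℝ) * H := by
        apply mul_le_mul_of_nonneg_right _ hH
        have : c - a ≤ k := by omega
        exact_mod_cast this

def ChiProp {m n : ℕ} (A : Fin m → Fin n → ℝ) (c : ℕ) (H : ℝ) (J : Finset (Fin n))
    (χ : {x // x ∈ J} → Fin c) : Prop :=
  ∀ (d : Fin c) (i : Fin m),
    |∑ j ∈ Finset.univ.filter (fun j => χ j = d), A i j.1
      - (1/(c:ℝ)) * ∑ j : {x // x ∈ J}, A i j.1| ≤ H

lemma valbound {m n c ℓ : ℕ} (hc : 3 ≤ c) (hodd : Odd c)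
    (A : Fin m → Fin n → ℝ) (J : Finset (Fin n)) (χ : {x // x ∈ J} → Fin c)
    (H : ℝ)
    (hχ : ChiProp A c H J χ)
    (a : ℕ) (ha : a < c) (i : Fin m) :
    |∑ j : {x // x ∈ J}, A i j.1 *
        ((a:ℝ) / (c:ℝ)^ℓ - (if ((χ j):ℕ) < a then (c:ℝ)/(c:ℝ)^ℓ else 0))|
      ≤ ((c:ℝ)-1)/2 * H * ((c:ℝ)/(c:ℝ)^ℓ) := by
  have hc0 : (0:ℝ) < (c:ℝ) := by positivity
  have hcl : (0:ℝ) < (c:ℝ)^ℓ := by positivity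
  set t : ℝ := 1 / (c:ℝ)^ℓ with ht
  have ht0 : 0 < t := by positivity
  set T : Fin c → ℝ := fun d => ∑ j ∈ Finset.univ.filter (fun j => χ j = d), A i j.1 with hT
  set Sg : ℝ := ∑ j : {x // x ∈ J}, A i j.1 with hSg
  set E : Fin c → ℝ := fun d => T d - (1/(c:ℝ)) * Sg with hE
  have hsumT : ∑ d, T d = Sg := by
    exact Finset.sum_fiberwise_of_maps_to (fun j _ => Finset.mem_univ (χ j)) (fun j => A i j.1)
  have hsumE : ∑ d, E d = 0 := by
    simp only [hE, Finset.sum_sub_distrib, hsumT, Finset.sum_const, Finset.card_univ,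
      Fintype.card_fin, nsmul_eq_mul]
    field_simp
    ring
  have claim1 : ∑ j : {x // x ∈ J}, (if ((χ j):ℕ) < a then A i j.1 else 0)
      = ∑ d ∈ Finset.univ.filter (fun d : Fin c => (d:ℕ) < a), T d := by
    rw [← Finset.sum_fiberwise_of_maps_to (fun j _ => Finset.mem_univ (χ j))
      (fun j => if ((χ j):ℕ) < a then A i j.1 else 0)]
    rw [Finset.sum_filter]
    apply Finset.sum_congr rfl
    intro d _
    by_cases hd : (d:ℕ) < a
    · rw [if_pos hd]
      apply Finset.sum_congr rfl
      intro j hj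
      rw [Finset.mem_filter] at hj
      rw [if_pos (hj.2 ▸ hd)]
    · rw [if_neg hd]
      apply Finset.sum_eq_zero
      intro j hj
      rw [Finset.mem_filter] at hj
      rw [if_neg (hj.2 ▸ hd)]
  have expand : ∑ j : {x // x ∈ J}, A i j.1 *
        ((a:ℝ) / (c:ℝ)^ℓ - (if ((χ j):ℕ) < a then (c:ℝ)/(c:ℝ)^ℓ else 0))
      = (a:ℝ) * t * Sg - (c:ℝ) * t *
          (∑ j : {x // x ∈ J}, (if ((χ j):ℕ) < a then A i j.1 else 0)) := by
    rw [hSg, Finset.mul_sum, Finset.mul_sum, ← Finset.sum_sub_distrib]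
    apply Finset.sum_congr rfl
    intro j _
    by_cases hd : ((χ j):ℕ) < a
    · rw [if_pos hd, if_pos hd, ht]; field_simp
    · rw [if_neg hd, if_neg hd, ht]; field_simp; ring
  have key : ∑ j : {x // x ∈ J}, A i j.1 *
        ((a:ℝ) / (c:ℝ)^ℓ - (if ((χ j):ℕ) < a then (c:ℝ)/(c:ℝ)^ℓ else 0))
      = - ((c:ℝ) * t) * ∑ d ∈ Finset.univ.filter (fun d : Fin c => (d:ℕ) < a), E d := by
    rw [expand, claim1]
    have : ∑ d ∈ Finset.univ.filter (fun d : Fin c => (d:ℕ) < a), T d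
        = (∑ d ∈ Finset.univ.filter (fun d : Fin c => (d:ℕ) < a), E d)
          + (a:ℝ) * ((1/(c:ℝ)) * Sg) := by
      simp only [hE, Finset.sum_sub_distrib, Finset.sum_const, nsmul_eq_mul,
        card_lt_filter c a ha.le]
      ring
    rw [this]
    field_simp
    ring
  rw [key, abs_mul, abs_neg, abs_mul, abs_of_pos hc0, abs_of_pos ht0]
  have hb := coreE hc hodd a ha E H (fun d => hχ d i) hsumE
  calc (c:ℝ) * t * |∑ d ∈ Finset.univ.filter (fun d : Fin c => (d:ℕ) < a), E d|
      ≤ (c:ℝ) * t * (((c:ℝ)-1)/2 * H) := by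
        apply mul_le_mul_of_nonneg_left hb (by positivity)
  _ = ((c:ℝ)-1)/2 * H * ((c:ℝ)/(c:ℝ)^ℓ) := by rw [ht]; ring

lemma exists_chi {m n : ℕ} (A : Fin m → Fin n → ℝ) (c : ℕ) (hc : 3 ≤ c)
    (J : Finset (Fin n)) (hJ : J.Nonempty) :
    ∃ χ : {x // x ∈ J} → Fin c, ChiProp A c (mherdisc A c) J χ := by
  haveI : Nonempty (Fin c) := ⟨⟨0, by omega⟩⟩
  set val : ({x // x ∈ J} → Fin c) → ℝ := fun χ => ⨆ d : Fin c, ⨆ i : Fin m,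
    |∑ j ∈ Finset.univ.filter (fun j => χ j = d), A i j.1
        - (1/(c:ℝ)) * ∑ j : {x // x ∈ J}, A i j.1| with hval
  obtain ⟨χ0, hχ0⟩ := Finite.exists_min val
  rw [show mherdisc A c = mherdisc A c from rfl]
  refine ⟨χ0, fun d i => ?_⟩
  show |∑ j ∈ Finset.univ.filter (fun j => χ0 j = d), A i j.1
        - (1/(c:ℝ)) * ∑ j : {x // x ∈ J}, A i j.1| ≤ mherdisc A c
  have h1 : |∑ j ∈ Finset.univ.filter (fun j => χ0 j = d), A i j.1
        - (1/(c:ℝ)) * ∑ j : {x // x ∈ J}, A i j.1| ≤ val χ0 := by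
    rw [hval]
    have i1 := le_ciSup (f := fun i : Fin m =>
      |∑ j ∈ Finset.univ.filter (fun j => χ0 j = d), A i j.1
        - (1/(c:ℝ)) * ∑ j : {x // x ∈ J}, A i j.1|)
      (Set.Finite.bddAbove (Set.finite_range _)) i
    have i2 := le_ciSup (f := fun d : Fin c => ⨆ i : Fin m,
      |∑ j ∈ Finset.univ.filter (fun j => χ0 j = d), A i j.1
        - (1/(c:ℝ)) * ∑ j : {x // x ∈ J}, A i j.1|)
      (Set.Finite.bddAbove (Set.finite_range _)) d
    exact i1.trans i2
  have h2 : val χ0 ≤ mdisc (fun i (j : {x // x ∈ J}) => A i j.1) c := by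
    exact le_ciInf hχ0
  have h3 : mdisc (fun i (j : {x // x ∈ J}) => A i j.1) c ≤ mherdisc A c := by
    exact le_ciSup (f := fun J : {J : Finset (Fin n) // J.Nonempty} =>
      mdisc (fun i (j : {x // x ∈ J.1}) => A i j.1) c)
      (Set.Finite.bddAbove (Set.finite_range _)) ⟨J, hJ⟩
  calc _ ≤ val χ0 := h1
  _ ≤ _ := h2.trans h3

lemma digit_split (c ℓ : ℕ) (hc : 3 ≤ c) (hl : 1 ≤ ℓ) (v : ℝ) (hv : v ∈ Mset c ℓ) :
    ∃ K a : ℕ, a < c ∧ v = (K:ℝ)/(c:ℝ)^(ℓ-1) + (a:ℝ)/(c:ℝ)^ℓ := by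
  obtain ⟨hIcc, b, hb, hrep⟩ := hv
  refine ⟨∑ i : Fin ℓ, b i.castSucc * c^(ℓ-1-(i:ℕ)), b (Fin.last ℓ), hb _, ?_⟩
  rw [hrep, Fin.sum_univ_castSucc]
  congr 1
  push_cast
  rw [Finset.sum_div]
  apply Finset.sum_congr rfl
  intro i _
  have hle : (i:ℕ) ≤ ℓ - 1 := by omega
  rw [Fin.coe_castSucc, div_eq_div_iff (by positivity) (by positivity), mul_assoc, ← pow_add]
  congr 2
  omega

/-- Rounding a floating coloring with values in M_{c,ℓ} taking exactly τ distinct values: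
there is q with values in M_{c,ℓ−1} with d_A(p, q) ≤ (1/2)·(c−1)·c^{−ℓ+1}·τ·herdisc(A, c). -/
theorem rounding_general {m n : ℕ} (hm : 0 < m) (hn : 0 < n)
    (A : Fin m → Fin n → ℝ) (c ℓ : ℕ) (hc : 3 ≤ c) (hodd : Odd c) (hl : 1 ≤ ℓ)
    (p : Fin n → ℝ) (hp : ∀ j, p j ∈ Mset c ℓ) (τ : ℕ)
    (hτ : (Finset.univ.image p).card = τ) :
    ∃ q : Fin n → ℝ, (∀ j, q j ∈ Mset c (ℓ - 1)) ∧
      dA A p q ≤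
        (1 / 2) * ((c : ℝ) - 1) * (c : ℝ) ^ ((1 : ℤ) - ℓ) * (τ : ℝ) * mherdisc A c := by
  obtain ⟨L, rfl⟩ : ∃ L, ℓ = L + 1 := ⟨ℓ - 1, by omega⟩
  have hc0 : (0:ℝ) < (c:ℝ) := by
    have : 0 < c := by omega
    exact_mod_cast this
  have hcL : (0:ℝ) < (c:ℝ)^L := by positivity
  have hcl1 : (0:ℝ) < (c:ℝ)^(L+1) := by positivity
  haveI : Nonempty (Fin c) := ⟨⟨0, by omega⟩⟩
  haveI : Nonempty (Fin m) := ⟨⟨0, hm⟩⟩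
  set H := mherdisc A c with hHdef
  have hex : ∀ v : ℝ, v ∈ Finset.univ.image p →
      ∃ (K a : ℕ), ∃ χ : {x // x ∈ Finset.univ.filter (fun j => p j = v)} → Fin c,
        a < c ∧ v = (K:ℝ)/(c:ℝ)^L + (a:ℝ)/(c:ℝ)^(L+1) ∧
        ChiProp A c H (Finset.univ.filter (fun j => p j = v)) χ := by
    intro v hv
    obtain ⟨j0, _, hj0⟩ := Finset.mem_image.mp hv
    have hvM : v ∈ Mset c (L+1) := hj0 ▸ hp j0
    obtain ⟨K, a, ha, hsplit⟩ := digit_split c (L+1) hc (by omega) v hvM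
    have hne : (Finset.univ.filter (fun j => p j = v)).Nonempty :=
      ⟨j0, Finset.mem_filter.mpr ⟨Finset.mem_univ _, hj0⟩⟩
    obtain ⟨χ, hχ⟩ := exists_chi A c hc _ hne
    exact ⟨K, a, χ, ha, by simpa using hsplit, hχ⟩
  choose! K a χ hlt hsplit hχ using hex
  set χ' : ℝ → Fin n → Fin c := fun v j =>
    if h : j ∈ Finset.univ.filter (fun j => p j = v) then χ v ⟨j, h⟩ else ⟨0, by omega⟩ with hχ'
  set q : Fin n → ℝ := fun j =>
    ((K (p j) + if ((χ' (p j) j):ℕ) < a (p j) then 1 else 0 : ℕ) : ℝ) / (c:ℝ)^L with hq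
  have hVmem : ∀ j, p j ∈ Finset.univ.image p := fun j =>
    Finset.mem_image_of_mem p (Finset.mem_univ j)
  refine ⟨q, ?_, ?_⟩
  · -- membership in Mset c L
    intro j
    have hsp := hsplit (p j) (hVmem j)
    have hle1 : p j ≤ 1 := (hp j).1.2
    have hKle : (K (p j):ℝ) ≤ (c:ℝ)^L := by
      have ha0 : (0:ℝ) ≤ (a (p j):ℝ)/(c:ℝ)^(L+1) := by positivity
      have h1 : (K (p j):ℝ)/(c:ℝ)^L ≤ 1 := by linarith
      rw [div_le_one hcL] at h1
      exact h1
    set k' : ℕ := K (p j) + if ((χ' (p j) j):ℕ) < a (p j) then 1 else 0 with hk'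
    have hk'le : k' ≤ c^L := by
      by_cases hif : ((χ' (p j) j):ℕ) < a (p j)
      · have ha1 : 1 ≤ a (p j) := by omega
        have hstrict : (K (p j):ℝ) < (c:ℝ)^L := by
          have hpos : (0:ℝ) < (a (p j):ℝ)/(c:ℝ)^(L+1) := by
            apply div_pos _ hcl1
            exact_mod_cast ha1
          have h1 : (K (p j):ℝ)/(c:ℝ)^L < 1 := by linarith
          rw [div_lt_one hcL] at h1
          exact h1
        have : K (p j) < c^L := by
          have := hstrict
          rw [show ((c:ℝ)^L) = ((c^L : ℕ):ℝ) by push_cast; ring] at this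
          exact_mod_cast this
        rw [hk', if_pos hif]
        omega
      · rw [hk', if_neg hif]
        simp only [add_zero]
        have : K (p j) ≤ c^L := by
          rw [show ((c:ℝ)^L) = ((c^L : ℕ):ℝ) by push_cast; ring] at hKle
          exact_mod_cast hKle
        omega
    have hmem := mem_Mset_of c L k' (by omega) hk'le
    have : q j = (k' : ℝ) / (c:ℝ)^L := by rw [hq]
    rw [this]
    simpa using hmem
  · -- discrepancy bound
    apply ciSup_le
    intro i
    set B : ℝ := ((c:ℝ)-1)/2 * H * ((c:ℝ)/(c:ℝ)^(L+1)) with hB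
    have inner : ∀ v ∈ Finset.univ.image p,
        |∑ j ∈ Finset.univ.filter (fun j => p j = v), A i j * (p j - q j)| ≤ B := by
      intro v hv
      have step1 : ∑ j ∈ Finset.univ.filter (fun j => p j = v), A i j * (p j - q j)
          = ∑ j ∈ Finset.univ.filter (fun j => p j = v), A i j *
              ((a v:ℝ) / (c:ℝ)^(L+1) -
                (if ((χ' v j):ℕ) < a v then (c:ℝ)/(c:ℝ)^(L+1) else 0)) := by
        apply Finset.sum_congr rfl
        intro j hj
        have hpj : p j = v := (Finset.mem_filter.mp hj).2
        congr 1
        have hqj : q j = ((K v + if ((χ' v j):ℕ) < a v then 1 else 0 : ℕ):ℝ)/(c:ℝ)^L := by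
          rw [hq]
          simp only []
          rw [hpj]
        rw [hpj, hqj]
        nth_rewrite 1 [hsplit v hv]
        push_cast
        by_cases hif : ((χ' v j):ℕ) < a v
        · rw [if_pos hif, if_pos hif]
          rw [pow_succ]
          field_simp
          ring
        · rw [if_neg hif, if_neg hif]
          field_simp
          ring
      rw [step1, ← Finset.sum_coe_sort (Finset.univ.filter (fun j => p j = v))]
      have step2 : ∀ j : {x // x ∈ Finset.univ.filter (fun j => p j = v)},
          χ' v j.1 = χ v j := by
        intro j
        rw [hχ']
        simp only [dif_pos j.2]
      rw [show (∑ j : {x // x ∈ Finset.univ.filter (fun j => p j = v)}, A i j.1 *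
              ((a v:ℝ) / (c:ℝ)^(L+1) -
                (if ((χ' v j.1):ℕ) < a v then (c:ℝ)/(c:ℝ)^(L+1) else 0)))
          = (∑ j : {x // x ∈ Finset.univ.filter (fun j => p j = v)}, A i j.1 *
              ((a v:ℝ) / (c:ℝ)^(L+1) -
                (if ((χ v j):ℕ) < a v then (c:ℝ)/(c:ℝ)^(L+1) else 0))) from
        Finset.sum_congr rfl fun j _ => by rw [step2 j]]
      exact valbound hc hodd A _ (χ v) H (hχ v hv) (a v) (hlt v hv) i
    have grouped : ∑ j, A i j * (p j - q j)
        = ∑ v ∈ Finset.univ.image p, ∑ j ∈ Finset.univ.filter (fun j => p j = v),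
            A i j * (p j - q j) :=
      (Finset.sum_fiberwise_of_maps_to (fun j _ => hVmem j) _).symm
    calc |∑ j, A i j * (p j - q j)|
        = |∑ v ∈ Finset.univ.image p, ∑ j ∈ Finset.univ.filter (fun j => p j = v),
            A i j * (p j - q j)| := by rw [grouped]
      _ ≤ ∑ v ∈ Finset.univ.image p, |∑ j ∈ Finset.univ.filter (fun j => p j = v),
            A i j * (p j - q j)| := Finset.abs_sum_le_sum_abs _ _
      _ ≤ ∑ _v ∈ Finset.univ.image p, B := Finset.sum_le_sum inner
      _ = (τ:ℝ) * B := by rw [Finset.sum_const, hτ, nsmul_eq_mul]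
      _ = (1 / 2) * ((c : ℝ) - 1) * (c : ℝ) ^ ((1 : ℤ) - (L+1:ℕ)) * (τ : ℝ) * H := by
          rw [hB]
          rw [zpow_sub₀ (ne_of_gt hc0), zpow_one, zpow_natCast]
          field_simp
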